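/- The series ∑_{m=1}^∞ ((2m-2)!/(m!·(m-1)!) · 2/4^m)² converges to 4/π - 1. -/

import Mathlib

open Real Filter Finset Topology

noncomputable def uu (n : ℕ) : ℝ := (Nat.centralBinom n : ℝ) / 4 ^ n

lemma uu_zero : uu 0 = 1 := by simp [uu, Nat.centralBinom]

lemma uu_succ (n : ℕ) : uu (n + 1) = uu n * (2 * n + 1) / (2 * (n + 1)) := by
  have h := Nat.succ_mul_centralBinom_succ n
  have h' : ((n : ℝ) + 1) * (Nat.centralBinom (n + 1) : ℝ)
      = 2 * (2 * n + 1) * (Nat.centralBinom n : ℝ) := by exact_mod_cast h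
  have h4 : (4 : ℝ) ^ n ≠ 0 := by positivity
  have hn : (n : ℝ) + 1 ≠ 0 := by positivity
  have hcb : (Nat.centralBinom (n + 1) : ℝ) = 2 * (2 * n + 1) * (Nat.centralBinom n : ℝ) / (n + 1) := by
    field_simp
    linarith [h']
  rw [uu, uu, hcb, pow_succ]
  field_simp
  ring

lemma sum_eq (N : ℕ) :
    ∑ m ∈ range N, uu m ^ 2 / (4 * (m + 1) ^ 2) = (4 * N + 1) * uu N ^ 2 - 1 := by
  induction N with
  | zero => simp [uu_zero]
  | succ N ih =>
    rw [Finset.sum_range_succ, ih, uu_succ]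
    have hn : ((N : ℝ) + 1) ≠ 0 := by positivity
    field_simp
    push_cast
    ring

lemma wallis_uu (n : ℕ) :
    (∏ i ∈ range n, ((2 : ℝ) * i + 2) / (2 * i + 1) * ((2 * i + 2) / (2 * i + 3)))
      * ((2 * n + 1) * uu n ^ 2) = 1 := by
  induction n with
  | zero => simp [uu_zero]
  | succ n ih =>
    rw [Finset.prod_range_succ, uu_succ]
    have h1 : (2 * (n : ℝ) + 1) ≠ 0 := by positivity
    have h2 : (2 * (n : ℝ) + 2) ≠ 0 := by positivity
    have h3 : (2 * (n : ℝ) + 3) ≠ 0 := by positivity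
    have key : ((2 * (n : ℝ) + 2) / (2 * n + 1) * ((2 * n + 2) / (2 * n + 3)))
        * ((2 * (n + 1 : ℕ) + 1) * (uu n * (2 * n + 1) / (2 * (n + 1))) ^ 2)
        = (2 * n + 1) * uu n ^ 2 := by
      have hn : ((n : ℝ) + 1) ≠ 0 := by positivity
      push_cast
      field_simp
      ring
    rw [mul_assoc, key, ih]

lemma tendsto_v : Tendsto (fun n : ℕ => (2 * (n : ℝ) + 1) * uu n ^ 2) atTop (𝓝 (2 / π)) := by
  have hW := Real.tendsto_prod_pi_div_two
  have hπ : (π / 2 : ℝ) ≠ 0 := by positivity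
  have := hW.inv₀ hπ
  have heq : (fun n : ℕ => (∏ i ∈ range n,
      ((2 : ℝ) * i + 2) / (2 * i + 1) * ((2 * i + 2) / (2 * i + 3)))⁻¹)
      = fun n : ℕ => (2 * (n : ℝ) + 1) * uu n ^ 2 := by
    funext n
    exact (eq_inv_of_mul_eq_one_right (wallis_uu n)).symm
  rw [heq, inv_div] at this
  exact this

lemma uu_sq_tendsto : Tendsto (fun n : ℕ => uu n ^ 2) atTop (𝓝 0) := by
  have h1 : Tendsto (fun n : ℕ => (2 * (n : ℝ) + 1)⁻¹) atTop (𝓝 0) := by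
    apply Tendsto.inv_tendsto_atTop
    apply Filter.tendsto_atTop_add_const_right
    exact tendsto_natCast_atTop_atTop.const_mul_atTop two_pos
  have := h1.mul tendsto_v
  simp only [zero_mul] at this
  convert this using 2 with n
  have h2 : (2 * (n : ℝ) + 1) ≠ 0 := by positivity
  field_simp

theorem stmt_5 :
    HasSum (fun m : ℕ =>
      (((2 * m).factorial : ℝ) / ((m + 1).factorial * m.factorial) * 2 / 4 ^ (m + 1)) ^ 2)
      (4 / π - 1) := by
  have hterm : ∀ m : ℕ,
      (((2 * m).factorial : ℝ) / ((m + 1).factorial * m.factorial) * 2 / 4 ^ (m + 1)) ^ 2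
      = uu m ^ 2 / (4 * (m + 1) ^ 2) := by
    intro m
    have hcb : ((2 * m).factorial : ℝ) = (Nat.centralBinom m : ℝ) * m.factorial * m.factorial := by
      rw [Nat.centralBinom]
      have hle : m ≤ 2 * m := by omega
      have h := Nat.choose_mul_factorial_mul_factorial hle
      rw [show 2 * m - m = m by omega] at h
      exact_mod_cast h.symm
    have hfs : ((m + 1).factorial : ℝ) = (m + 1) * m.factorial := by
      push_cast [Nat.factorial_succ]; ring
    have hm : (m.factorial : ℝ) ≠ 0 := by exact_mod_cast m.factorial_ne_zero
    have hm1 : ((m : ℝ) + 1) ≠ 0 := by positivity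
    have h4 : (4 : ℝ) ^ m ≠ 0 := by positivity
    rw [hcb, hfs]
    simp only [uu]
    field_simp [uu, pow_succ]
    ring
  rw [funext hterm]
  have hnonneg : ∀ m : ℕ, (0 : ℝ) ≤ uu m ^ 2 / (4 * (m + 1) ^ 2) := by
    intro m; positivity
  rw [hasSum_iff_tendsto_nat_of_nonneg hnonneg]
  have heq : (fun n : ℕ => ∑ m ∈ range n, uu m ^ 2 / (4 * (m + 1) ^ 2))
      = fun n : ℕ => 2 * ((2 * (n : ℝ) + 1) * uu n ^ 2) - uu n ^ 2 - 1 := by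
    funext n
    rw [sum_eq]
    ring
  rw [heq]
  have := ((tendsto_v.const_mul 2).sub uu_sq_tendsto).sub (tendsto_const_nhds (x := (1:ℝ)))
  convert this using 2
  ring
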